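/- Let R be a Noetherian ring and I an ideal generated by a regular sequence a_1, ..., a_μ. Then the natural (R/I)-algebra homomorphism from the polynomial ring (R/I)[X_1,...,X_μ] to the associated graded ring ⊕_{m≥0} I^m/I^{m+1}, sending X_i to the class of a_i in I/I^2, is an isomorphism. -/

import Mathlib

/-!
STATEMENT 2: If `I` is generated by a regular sequence `a_1, ..., a_μ` in a Noetherian
ring `R`, the natural `(R/I)`-algebra map `(R/I)[X_1,...,X_μ] → ⊕_m I^m/I^{m+1}`,
`X_i ↦ a_i mod I²`, is an isomorphism.

This is encoded degreewise through the evaluation map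
`R[X_1,...,X_μ]_m → I^m/I^{m+1}`, `F ↦ F(a_1,...,a_μ) mod I^{m+1}`:
surjectivity says every element of `I^m` is the value of a homogeneous degree-`m`
polynomial, and injectivity says that a homogeneous degree-`m` polynomial whose value
lies in `I^{m+1}` has all coefficients in `I` (i.e. it maps to `0` in `(R/I)[X]`).
This is precisely the assertion that the displayed `(R/I)`-algebra map is bijective.
-/

open MvPolynomial RingTheory.Sequence

namespace Stmt2Aux

variable {R : Type*} [CommRing R]

/-- The ideal generated by the range of `v`. -/
abbrev Jv {k : ℕ} (v : Fin k → R) : Ideal R := Ideal.span (Set.range v)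

lemma mem_Jv {k : ℕ} (v : Fin k → R) (i : Fin k) : v i ∈ Jv v :=
  Ideal.subset_span ⟨i, rfl⟩

lemma prodpow_mem {k : ℕ} (v : Fin k → R) (s : Finset (Fin k)) (d : Fin k → ℕ) :
    (∏ i ∈ s, v i ^ d i) ∈ Jv v ^ (∑ i ∈ s, d i) := by
  classical
  induction s using Finset.induction_on with
  | empty => simp [Ideal.one_eq_top]
  | insert _ _ hnot ih =>
    rename_i a s
    rw [Finset.prod_insert hnot, Finset.sum_insert hnot, pow_add]
    exact Ideal.mul_mem_mul (Ideal.pow_mem_pow (mem_Jv v a) _) ih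

lemma degree_of_mem_support {k m : ℕ} {F : MvPolynomial (Fin k) R}
    (hF : F.IsHomogeneous m) {d : Fin k →₀ ℕ} (hd : coeff d F ≠ 0) :
    Finsupp.degree d = m := by
  by_contra h
  exact hd (hF.coeff_eq_zero h)

lemma isHomog_of {k m : ℕ} {F : MvPolynomial (Fin k) R}
    (h : ∀ d, coeff d F ≠ 0 → Finsupp.degree d = m) : F.IsHomogeneous m := by
  intro d hd
  have := h d hd
  rwa [Finsupp.degree_eq_weight_one] at this

lemma aeval_mem {k m : ℕ} (v : Fin k → R) (F : MvPolynomial (Fin k) R)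
    (hF : F.IsHomogeneous m) (K : Ideal R) (hc : ∀ d, coeff d F ∈ K) :
    aeval v F ∈ K * Jv v ^ m := by
  classical
  rw [F.as_sum, map_sum]
  refine Submodule.sum_mem _ fun d hd => ?_
  rw [aeval_monomial]
  have hdeg : Finsupp.degree d = m :=
    degree_of_mem_support hF (mem_support_iff.mp hd)
  have h2 : (d.prod fun i e => v i ^ e) ∈ Jv v ^ m := by
    rw [← hdeg]
    exact prodpow_mem v d.support d
  simpa using Ideal.mul_mem_mul (hc d) h2

lemma aeval_mem_pow {k m : ℕ} (v : Fin k → R) (F : MvPolynomial (Fin k) R)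
    (hF : F.IsHomogeneous m) : aeval v F ∈ Jv v ^ m := by
  have := aeval_mem v F hF ⊤ (fun _ => trivial)
  rwa [Ideal.top_mul] at this

lemma aeval_mem_pow_succ {k m : ℕ} (v : Fin k → R) (F : MvPolynomial (Fin k) R)
    (hF : F.IsHomogeneous m) (hc : ∀ d, coeff d F ∈ Jv v) :
    aeval v F ∈ Jv v ^ (m + 1) := by
  have := aeval_mem v F hF (Jv v) hc
  rwa [← pow_succ'] at this

lemma surj {k : ℕ} (v : Fin k → R) (m : ℕ) :
    ∀ x ∈ Jv v ^ m, ∃ F : MvPolynomial (Fin k) R,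
      F.IsHomogeneous m ∧ aeval v F = x := by
  induction m with
  | zero =>
    intro x _
    exact ⟨C x, isHomogeneous_C _ _, by simp⟩
  | succ m ih =>
    intro x hx
    rw [pow_succ] at hx
    refine Submodule.mul_induction_on hx ?_ ?_
    · intro y hy a ha
      obtain ⟨G, hG, hGv⟩ := ih y hy
      obtain ⟨c, hc⟩ := (Submodule.mem_span_range_iff_exists_fun R).mp ha
      refine ⟨G * ∑ i, C (c i) * X i, ?_, ?_⟩
      · exact hG.mul (IsHomogeneous.sum _ _ 1 fun i _ => isHomogeneous_C_mul_X _ _)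
      · rw [map_mul, hGv, map_sum]
        simp only [map_mul, aeval_C, aeval_X]
        rw [show ∑ i, algebraMap R R (c i) * v i = a by simpa [smul_eq_mul] using hc]
    · rintro x y ⟨F₁, h₁, e₁⟩ ⟨F₂, h₂, e₂⟩
      exact ⟨F₁ + F₂, h₁.add h₂, by rw [map_add, e₁, e₂]⟩

lemma surjJ {k : ℕ} (v : Fin k → R) (m : ℕ) :
    ∀ x ∈ Jv v ^ (m + 1), ∃ F : MvPolynomial (Fin k) R,
      F.IsHomogeneous m ∧ (∀ d, coeff d F ∈ Jv v) ∧ aeval v F = x := by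
  intro x hx
  rw [pow_succ] at hx
  refine Submodule.mul_induction_on hx ?_ ?_
  · intro y hy a ha
    obtain ⟨G, hG, hGv⟩ := surj v m y hy
    refine ⟨C a * G, hG.C_mul a, fun d => ?_, ?_⟩
    · rw [coeff_C_mul]
      exact Ideal.mul_mem_right _ _ ha
    · rw [map_mul, aeval_C, hGv]
      simp [mul_comm]
  · rintro x y ⟨F₁, h₁, c₁, e₁⟩ ⟨F₂, h₂, c₂, e₂⟩
    exact ⟨F₁ + F₂, h₁.add h₂,
      fun d => by rw [coeff_add]; exact Ideal.add_mem _ (c₁ d) (c₂ d),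
      by rw [map_add, e₁, e₂]⟩

/-- Regularity of `b` modulo all powers of `Jv v`, given quasi-regularity of `v`. -/
lemma regMod {k : ℕ} (v : Fin k → R)
    (hQR : ∀ (m : ℕ) (F : MvPolynomial (Fin k) R), F.IsHomogeneous m →
      aeval v F ∈ Jv v ^ (m + 1) → ∀ d, coeff d F ∈ Jv v)
    (b : R) (hb : ∀ y, b * y ∈ Jv v → y ∈ Jv v) :
    ∀ (m : ℕ) (x : R), b * x ∈ Jv v ^ m → x ∈ Jv v ^ m := by
  intro m
  induction m with
  | zero => simp
  | succ m ih =>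
    intro x hx
    have hx' : x ∈ Jv v ^ m := ih x (Ideal.pow_le_pow_right (Nat.le_succ m) hx)
    obtain ⟨F, hF, hFv⟩ := surj v m x hx'
    have h2 : aeval v (C b * F) ∈ Jv v ^ (m + 1) := by
      rw [map_mul, aeval_C, hFv]; simpa using hx
    have hc := hQR m (C b * F) (hF.C_mul b) h2
    have hcF : ∀ d, coeff d F ∈ Jv v := fun d =>
      hb _ (by simpa [coeff_C_mul] using hc d)
    exact hFv ▸ aeval_mem_pow_succ v F hF hcF

lemma exists_rename {n : ℕ} (p : MvPolynomial (Fin (n + 1)) R)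
    (hp : ∀ d ∈ p.support, d (Fin.last n) = 0) :
    ∃ q : MvPolynomial (Fin n) R, rename Fin.castSucc q = p := by
  classical
  refine ⟨∑ d ∈ p.support,
    monomial (Finsupp.comapDomain Fin.castSucc d (Fin.castSucc_injective n).injOn)
      (coeff d p), ?_⟩
  rw [map_sum]
  conv_rhs => rw [p.as_sum]
  refine Finset.sum_congr rfl fun d hd => ?_
  rw [rename_monomial,
    Finsupp.mapDomain_comapDomain _ (Fin.castSucc_injective n) d ?_]
  intro i hi
  have hi' : d i ≠ 0 := Finsupp.mem_support_iff.mp hi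
  have hne : i ≠ Fin.last n := by
    intro h; exact hi' (h ▸ hp d hd)
  obtain ⟨j, hj⟩ := Fin.exists_castSucc_eq.mpr hne
  exact ⟨j, hj⟩

lemma eq_C_of_isHomogeneous_zero {k : ℕ} (F : MvPolynomial (Fin k) R)
    (hF : F.IsHomogeneous 0) : F = C (coeff 0 F) := by
  ext d
  by_cases hd : d = 0
  · simp [hd]
  · rw [coeff_C, if_neg (Ne.symm hd)]
    refine hF.coeff_eq_zero fun h => hd ?_
    exact (Finsupp.degree_eq_zero_iff d).mp h

theorem quasiReg : ∀ {k : ℕ} (v : Fin k → R),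
    IsWeaklyRegular R (List.ofFn v) →
    ∀ (m : ℕ) (F : MvPolynomial (Fin k) R), F.IsHomogeneous m →
      aeval v F ∈ Jv v ^ (m + 1) → ∀ d, coeff d F ∈ Jv v := by
  intro k
  induction k with
  | zero =>
    intro v _ m F _ hFv d
    obtain ⟨c, rfl⟩ := C_surjective (Fin 0) F
    have hd : d = 0 := Subsingleton.elim _ _
    have : c ∈ Jv v ^ 1 := Ideal.pow_le_pow_right (Nat.le_add_left 1 m) (by simpa using hFv)
    rw [hd, coeff_C, if_pos rfl]
    simpa using this
  | succ n ihn =>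
    intro v hreg
    set v' : Fin n → R := fun i => v i.castSucc with hv'
    set b : R := v (Fin.last n) with hbdef
    have hofn : List.ofFn v = List.ofFn v' ++ [b] := by
      rw [List.ofFn_succ', List.concat_eq_append]
    rw [hofn, isWeaklyRegular_append_iff] at hreg
    obtain ⟨hreg', hb0⟩ := hreg
    have hJ'sub : (Ideal.ofList (List.ofFn v') • ⊤ : Submodule R R) = Jv v' := by
      rw [smul_eq_mul, Ideal.mul_top]
      exact congrArg Ideal.span (Set.ext fun x => List.mem_ofFn)
    have hbreg : ∀ y, b * y ∈ Jv v' → y ∈ Jv v' := by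
      rw [isWeaklyRegular_singleton_iff] at hb0
      intro y hy
      have hmky : (Submodule.Quotient.mk y :
          R ⧸ (Ideal.ofList (List.ofFn v') • ⊤ : Submodule R R)) = 0 := by
        apply hb0
        show b • (Submodule.Quotient.mk y :
          R ⧸ (Ideal.ofList (List.ofFn v') • ⊤ : Submodule R R)) = b • 0
        rw [smul_zero, ← Submodule.Quotient.mk_smul, Submodule.Quotient.mk_eq_zero, hJ'sub]
        simpa [smul_eq_mul] using hy
      rw [Submodule.Quotient.mk_eq_zero, hJ'sub] at hmky
      exact hmky
    have hQR' := ihn v' hreg'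
    have hA : ∀ (m : ℕ) (x : R), b * x ∈ Jv v' ^ m → x ∈ Jv v' ^ m :=
      regMod v' hQR' b hbreg
    have hJ'J : Jv v' ≤ Jv v := by
      refine Ideal.span_mono ?_
      rintro _ ⟨i, rfl⟩
      exact ⟨i.castSucc, rfl⟩
    have hbJ : b ∈ Jv v := mem_Jv v _
    intro m
    induction m with
    | zero =>
      intro F hF hFv d
      have hFC := eq_C_of_isHomogeneous_zero F hF
      by_cases hd : d = 0
      · rw [hd, hFC, coeff_C, if_pos rfl]
        have : aeval v F = coeff 0 F := by rw [hFC, aeval_C]; simp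
        rw [← this]
        simpa using hFv
      · rw [hFC, coeff_C, if_neg (Ne.symm hd)]
        exact zero_mem _
    | succ m ihm =>
      intro F hF hFv
      obtain ⟨D, hD, hDc, hDv⟩ := surjJ v (m + 1) _ hFv
      set F' := F - D with hF'def
      have hF'h : F'.IsHomogeneous (m + 1) := hF.sub hD
      have hF'v : aeval v F' = 0 := by rw [map_sub, hDv, sub_self]
      suffices hsuf : ∀ d, coeff d F' ∈ Jv v by
        intro d
        have : coeff d F = coeff d F' + coeff d D := by
          rw [hF'def, coeff_sub]; ring
        rw [this]
        exact Ideal.add_mem _ (hsuf d) (hDc d)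
      set s : Fin (n + 1) →₀ ℕ := Finsupp.single (Fin.last n) 1 with hs
      set G := F'.modMonomial s with hGdef
      set H := F'.divMonomial s with hHdef
      have hsplit : monomial s 1 * H + G = F' := F'.divMonomial_add_modMonomial s
      have hsle : ∀ d : Fin (n + 1) →₀ ℕ, s ≤ d ↔ d (Fin.last n) ≠ 0 := by
        intro d
        rw [hs, Finsupp.single_le_iff]
        exact Nat.one_le_iff_ne_zero
      have hGc0 : ∀ d, s ≤ d → coeff d G = 0 := fun d h =>
        coeff_modMonomial_of_le F' h
      have hGcF : ∀ d, ¬ s ≤ d → coeff d G = coeff d F' := fun d h =>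
        coeff_modMonomial_of_not_le F' h
      have hHcF : ∀ d, coeff d H = coeff (s + d) F' := fun d =>
        coeff_divMonomial s F' d
      have hGlast : ∀ d ∈ G.support, d (Fin.last n) = 0 := by
        intro d hd
        by_contra h
        exact (Finsupp.mem_support_iff.mp hd) (hGc0 d ((hsle d).mpr h))
      have hws : Finsupp.degree s = 1 := by
        rw [hs]
        simp [Finsupp.degree_single]
      have hGh : G.IsHomogeneous (m + 1) := by
        refine isHomog_of fun d hd => ?_
        by_cases hle : s ≤ d
        · exact absurd (hGc0 d hle) hd
        · rw [hGcF d hle] at hd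
          exact degree_of_mem_support hF'h hd
      have hHh : H.IsHomogeneous m := by
        refine isHomog_of fun d hd => ?_
        rw [hHcF d] at hd
        have h1 : Finsupp.degree (s + d) = m + 1 := degree_of_mem_support hF'h hd
        have h2 : Finsupp.degree (s + d) = Finsupp.degree s + Finsupp.degree d := by
          simp [Finsupp.degree_eq_weight_one, map_add]
        omega
      obtain ⟨G', hG'⟩ := exists_rename G hGlast
      have hGh' : G'.IsHomogeneous (m + 1) := by
        rw [← IsHomogeneous.rename_isHomogeneous_iff (Fin.castSucc_injective n)]
        rw [hG']; exact hGh
      have haevalG : aeval v G = aeval v' G' := by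
        rw [← hG', aeval_rename]
        rfl
      have hmono : aeval v (monomial s (1 : R)) = b := by
        rw [aeval_monomial, hs]
        simp [Finsupp.prod_single_index, hbdef]
      have hkey : aeval v' G' + b * aeval v H = 0 := by
        have h0 := hF'v
        rw [← hsplit] at h0
        simp only [map_add, map_mul] at h0
        rw [hmono, haevalG] at h0
        linear_combination h0
      have hbH : b * aeval v H ∈ Jv v' ^ (m + 1) := by
        have hG'm : aeval v' G' ∈ Jv v' ^ (m + 1) := aeval_mem_pow v' G' hGh'
        have heq : b * aeval v H = - aeval v' G' := by linear_combination hkey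
        rw [heq]
        exact neg_mem hG'm
      have hHm : aeval v H ∈ Jv v' ^ (m + 1) := hA (m + 1) _ hbH
      obtain ⟨K, hKh, hKv⟩ := surj v' (m + 1) _ hHm
      have hPv : aeval v' (G' + C b * K) = 0 := by
        rw [map_add, map_mul, aeval_C, hKv]
        simpa using hkey
      have hPc : ∀ d', coeff d' (G' + C b * K) ∈ Jv v' :=
        hQR' (m + 1) _ (hGh'.add (hKh.C_mul b)) (by rw [hPv]; exact zero_mem _)
      have hG'c : ∀ d', coeff d' G' ∈ Jv v := by
        intro d'
        have h1 : coeff d' G' = coeff d' (G' + C b * K) - b * coeff d' K := by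
          rw [coeff_add, coeff_C_mul]; ring
        rw [h1]
        exact sub_mem (hJ'J (hPc d')) (Ideal.mul_mem_right _ _ hbJ)
      have hGmem : ∀ d, coeff d G ∈ Jv v := by
        intro d
        by_cases h0 : coeff d G = 0
        · rw [h0]; exact zero_mem _
        · rw [← hG'] at h0 ⊢
          obtain ⟨u, hu, _⟩ := coeff_rename_ne_zero _ _ _ h0
          rw [← hu, coeff_rename_mapDomain _ (Fin.castSucc_injective n)]
          exact hG'c u
      have hHmem : ∀ d, coeff d H ∈ Jv v := by
        refine ihm H hHh ?_
        exact Ideal.pow_right_mono hJ'J (m + 1) hHm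
      intro d
      rw [← hsplit, coeff_add]
      refine Ideal.add_mem _ ?_ (hGmem d)
      rw [coeff_monomial_mul']
      split
      · rw [one_mul]; exact hHmem _
      · exact zero_mem _

end Stmt2Aux

theorem stmt2 {R : Type*} [CommRing R] [IsNoetherianRing R]
    (as : List R) (hreg : RingTheory.Sequence.IsRegular R as)
    (I : Ideal R) (hI : I = Ideal.ofList as) :
    ∀ m : ℕ,
      -- surjectivity onto `I^m/I^{m+1}` (indeed onto `I^m`)
      (∀ x ∈ I ^ m, ∃ F : MvPolynomial (Fin as.length) R,
        F.IsHomogeneous m ∧ MvPolynomial.aeval (fun i => as.get i) F = x) ∧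
      -- injectivity: the kernel of the evaluation map modulo `I^{m+1}` consists of the
      -- homogeneous polynomials with all coefficients in `I`
      (∀ F : MvPolynomial (Fin as.length) R, F.IsHomogeneous m →
        MvPolynomial.aeval (fun i => as.get i) F ∈ I ^ (m + 1) →
        ∀ d, MvPolynomial.coeff d F ∈ I) := by
  intro m
  have hIJ : I = Stmt2Aux.Jv (fun i => as.get i) := by
    rw [hI]
    exact congrArg Ideal.span (Set.ext fun x => by
      simpa using List.mem_iff_get (l := as) (a := x))
  constructor
  · intro x hx
    exact Stmt2Aux.surj _ m x (by rwa [← hIJ])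
  · intro F hF hFv
    have hofn : List.ofFn (fun i => as.get i) = as := List.ofFn_get as
    have hw : RingTheory.Sequence.IsWeaklyRegular R (List.ofFn fun i => as.get i) := by
      rw [hofn]; exact hreg.toIsWeaklyRegular
    have h := Stmt2Aux.quasiReg (fun i => as.get i) hw m F hF (by rwa [hIJ] at hFv)
    intro d
    rw [hIJ]
    exact h d
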